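/- Let 0 < λ < 1/5 and consider the two IFSs on ℝ with ratio λ and translations a = (0, λ(1−λ), 2λ(1−λ), 3λ, 1−λ) and b = (0, λ(1−λ), 2λ, 3λ−λ², 1−λ). Then the attractors K_a and K_b are Lipschitz equivalent. -/

import Mathlib

open Set

namespace RRX

def im (t p : ℝ) (S : Set ℝ) : Set ℝ := (fun x => t * x + p) '' S

lemma im_one (S : Set ℝ) : im 1 0 S = S := by simp [im]

lemma im_im (t p u q : ℝ) (S : Set ℝ) : im t p (im u q S) = im (t*u) (t*q+p) S := by
  ext x; simp [im]; constructor
  · rintro ⟨y, hy, rfl⟩; exact ⟨y, hy, by ring⟩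
  · rintro ⟨y, hy, rfl⟩; exact ⟨y, hy, by ring⟩

lemma im_union (t p : ℝ) (S T : Set ℝ) : im t p (S ∪ T) = im t p S ∪ im t p T :=
  Set.image_union _ _ _

lemma im_subset_Icc {t p : ℝ} {S : Set ℝ} (hS : S ⊆ Icc 0 1) (ht : 0 ≤ t) :
    im t p S ⊆ Icc p (p + t) := by
  rintro x ⟨y, hy, rfl⟩
  obtain ⟨h0, h1⟩ := hS hy
  constructor <;> simp <;> nlinarith

lemma im_compact {t p : ℝ} {S : Set ℝ} (hS : IsCompact S) : IsCompact (im t p S) :=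
  hS.image (by continuity)

lemma im_mem_base {t p : ℝ} {S : Set ℝ} (h0 : (0:ℝ) ∈ S) : p ∈ im t p S :=
  ⟨0, h0, by ring⟩

lemma subset_Icc01 {l : ℝ} (hl0 : 0 < l) (hl1 : l < 1) {K : Set ℝ}
    (hc : IsCompact K) (hne : K.Nonempty)
    (hself : ∀ x ∈ K, ∃ c, 0 ≤ c ∧ c ≤ 1 - l ∧ ∃ y ∈ K, x = l * y + c) :
    K ⊆ Icc 0 1 := by
  obtain ⟨M, hMmem, hMub⟩ := hc.exists_isGreatest hne
  obtain ⟨m, hmmem, hmlb⟩ := hc.exists_isLeast hne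
  have hM : M ≤ 1 := by
    obtain ⟨c, hc0, hc1, y, hy, hxy⟩ := hself M hMmem
    have := hMub hy; nlinarith
  have hm : 0 ≤ m := by
    obtain ⟨c, hc0, hc1, y, hy, hxy⟩ := hself m hmmem
    have := hmlb hy; nlinarith
  intro x hx
  exact ⟨le_trans hm (hmlb hx), le_trans (hMub hx) hM⟩

lemma zero_mem {l : ℝ} (hl0 : 0 < l) (hl1 : l < 1) {K : Set ℝ}
    (hc : IsCompact K) (hne : K.Nonempty)
    (hself : ∀ x ∈ K, ∃ c, 0 ≤ c ∧ c ≤ 1 - l ∧ ∃ y ∈ K, x = l * y + c)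
    (hscale : ∀ x ∈ K, l * x ∈ K) : (0:ℝ) ∈ K := by
  obtain ⟨m, hmmem, hmlb⟩ := hc.exists_isLeast hne
  have hm : 0 ≤ m := by
    obtain ⟨c, hc0, hc1, y, hy, hxy⟩ := hself m hmmem
    have := hmlb hy; nlinarith
  have h2 : m ≤ l * m := hmlb (hscale m hmmem)
  have : m = 0 := by nlinarith
  rwa [this] at hmmem


structure Cell where
  st : Bool
  p : ℝ
  q : ℝ
  n : ℕ

section Main
variable {l : ℝ} {Ka Kb : Set ℝ}

def aE (l : ℝ) (Ka : Set ℝ) (t p : ℝ) : Set ℝ :=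
  im t p Ka ∪ im t (p + (1-l)*t) Ka ∪ im t (p + 2*(1-l)*t) Ka

def bF (l : ℝ) (Kb : Set ℝ) (t q : ℝ) : Set ℝ :=
  im t q Kb ∪ im t (q + (1-l)*t) Kb

structure Setup (l : ℝ) (Ka Kb : Set ℝ) : Prop where
  hl0 : 0 < l
  hl5 : l < 1/5
  kac : IsCompact Ka
  kbc : IsCompact Kb
  ka01 : Ka ⊆ Icc 0 1
  kb01 : Kb ⊆ Icc 0 1
  ka0 : (0:ℝ) ∈ Ka
  kb0 : (0:ℝ) ∈ Kb
  eqa : Ka = im l 0 Ka ∪ im l (l*(1-l)) Ka ∪ im l (2*l*(1-l)) Ka ∪ im l (3*l) Ka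
          ∪ im l (1-l) Ka
  eqb : Kb = im l 0 Kb ∪ im l (l*(1-l)) Kb ∪ im l (2*l) Kb ∪ im l (3*l-l^2) Kb
          ∪ im l (1-l) Kb

variable (S : Setup l Ka Kb)
include S

lemma A1 (t p : ℝ) : im t p Ka =
    (aE l Ka (l*t) p ∪ im (l*t) (p + 3*(l*t)) Ka) ∪ im (l*t) (p + (1-l)*t) Ka := by
  conv_lhs => rw [S.eqa]
  simp only [im_union, im_im, aE]
  ring_nf
  try simp only [Set.union_assoc]

lemma B1 (t q : ℝ) : im t q Kb =
    (bF l Kb (l*t) q ∪ bF l Kb (l*t) (q + 2*(l*t))) ∪ im (l*t) (q + (1-l)*t) Kb := by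
  conv_lhs => rw [S.eqb]
  simp only [im_union, im_im, bF]
  ring_nf
  try simp only [Set.union_assoc]

lemma coverA2 (t p : ℝ) : aE l Ka t p ∪ im t (p+3*t) Ka =
    (aE l Ka (l*t) p ∪ im (l*t) (p + 3*(l*t)) Ka)
    ∪ (aE l Ka (l*t) (p+(1-l)*t) ∪ im (l*t) ((p+(1-l)*t) + 3*(l*t)) Ka)
    ∪ (aE l Ka (l*t) (p+2*(1-l)*t) ∪ im (l*t) ((p+2*(1-l)*t) + 3*(l*t)) Ka)
    ∪ (aE l Ka (l*t) (p+3*t) ∪ im (l*t) ((p+3*t) + 3*(l*t)) Ka)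
    ∪ im (l*t) (p+(4-l)*t) Ka
    ∪ im (l*t) (p+3*(1-l)*t) Ka := by
  conv_lhs => rw [aE]
  rw [A1 S t p, A1 S t (p+(1-l)*t), A1 S t (p+2*(1-l)*t), A1 S t (p+3*t)]
  simp only [aE]
  ext x; simp only [Set.mem_union]; ring_nf; tauto

lemma coverB2 (t q : ℝ) : bF l Kb t q ∪ bF l Kb t (q+2*t) =
    (bF l Kb (l*t) q ∪ bF l Kb (l*t) (q + 2*(l*t)))
    ∪ (bF l Kb (l*t) (q+(1-l)*t) ∪ bF l Kb (l*t) ((q+(1-l)*t) + 2*(l*t)))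
    ∪ (bF l Kb (l*t) (q+2*t) ∪ bF l Kb (l*t) ((q+2*t) + 2*(l*t)))
    ∪ (bF l Kb (l*t) (q+(3-l)*t) ∪ bF l Kb (l*t) ((q+(3-l)*t) + 2*(l*t)))
    ∪ im (l*t) (q+2*(1-l)*t) Kb
    ∪ im (l*t) (q+(4-2*l)*t) Kb := by
  conv_lhs => rw [bF]
  rw [bF, bF]
  rw [B1 S t q, B1 S t (q+(1-l)*t), B1 S t (q+2*t), B1 S t ((q+2*t)+(1-l)*t)]
  simp only [bF]
  ext x; simp only [Set.mem_union]; ring_nf; tauto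



def del (l : ℝ) : ℝ := min l (1 - 5*l)

lemma del_pos : 0 < del l := lt_min S.hl0 (by have := S.hl5; simp [del]; linarith)

def aset (l : ℝ) (Ka : Set ℝ) (c : Cell) : Set ℝ :=
  if c.st then im (l^c.n) c.p Ka
  else aE l Ka (l^c.n) c.p ∪ im (l^c.n) (c.p + 3*l^c.n) Ka

def bset (l : ℝ) (Kb : Set ℝ) (c : Cell) : Set ℝ :=
  if c.st then im (l^c.n) c.q Kb
  else bF l Kb (l^c.n) c.q ∪ bF l Kb (l^c.n) (c.q + 2*l^c.n)

def children (l : ℝ) (c : Cell) : List Cell :=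
  let t := l^c.n
  if c.st then
    [⟨false, c.p, c.q, c.n+1⟩, ⟨true, c.p+(1-l)*t, c.q+(1-l)*t, c.n+1⟩]
  else
    [⟨false, c.p, c.q, c.n+1⟩,
     ⟨false, c.p+(1-l)*t, c.q+(1-l)*t, c.n+1⟩,
     ⟨false, c.p+2*(1-l)*t, c.q+2*t, c.n+1⟩,
     ⟨false, c.p+3*t, c.q+(3-l)*t, c.n+1⟩,
     ⟨true, c.p+(4-l)*t, c.q+2*(1-l)*t, c.n+1⟩,
     ⟨true, c.p+3*(1-l)*t, c.q+(4-2*l)*t, c.n+1⟩]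

omit S in
lemma children_level {c c' : Cell} (h : c' ∈ children l c) : c'.n = c.n + 1 := by
  obtain ⟨st,p,q,n⟩ := c
  obtain ⟨st',p',q',n'⟩ := c'
  cases st <;> simp [children] at h <;> tauto

lemma cover_a_true (p q : ℝ) (n : ℕ) : aset l Ka ⟨true,p,q,n⟩ =
    aset l Ka ⟨false,p,q,n+1⟩ ∪ aset l Ka ⟨true,p+(1-l)*l^n,q+(1-l)*l^n,n+1⟩ := by
  simp only [aset, if_true, if_false, pow_succ']
  exact A1 S (l^n) p

lemma cover_b_true (p q : ℝ) (n : ℕ) : bset l Kb ⟨true,p,q,n⟩ =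
    bset l Kb ⟨false,p,q,n+1⟩ ∪ bset l Kb ⟨true,p+(1-l)*l^n,q+(1-l)*l^n,n+1⟩ := by
  simp only [bset, if_true, if_false, pow_succ']
  exact B1 S (l^n) q

lemma cover_a_false (p q : ℝ) (n : ℕ) : aset l Ka ⟨false,p,q,n⟩ =
    aset l Ka ⟨false,p,q,n+1⟩
    ∪ aset l Ka ⟨false,p+(1-l)*l^n,q+(1-l)*l^n,n+1⟩
    ∪ aset l Ka ⟨false,p+2*(1-l)*l^n,q+2*l^n,n+1⟩
    ∪ aset l Ka ⟨false,p+3*l^n,q+(3-l)*l^n,n+1⟩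
    ∪ aset l Ka ⟨true,p+(4-l)*l^n,q+2*(1-l)*l^n,n+1⟩
    ∪ aset l Ka ⟨true,p+3*(1-l)*l^n,q+(4-2*l)*l^n,n+1⟩ := by
  simp only [aset, if_true, if_false, pow_succ']
  exact coverA2 S (l^n) p

lemma cover_b_false (p q : ℝ) (n : ℕ) : bset l Kb ⟨false,p,q,n⟩ =
    bset l Kb ⟨false,p,q,n+1⟩
    ∪ bset l Kb ⟨false,p+(1-l)*l^n,q+(1-l)*l^n,n+1⟩
    ∪ bset l Kb ⟨false,p+2*(1-l)*l^n,q+2*l^n,n+1⟩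
    ∪ bset l Kb ⟨false,p+3*l^n,q+(3-l)*l^n,n+1⟩
    ∪ bset l Kb ⟨true,p+(4-l)*l^n,q+2*(1-l)*l^n,n+1⟩
    ∪ bset l Kb ⟨true,p+3*(1-l)*l^n,q+(4-2*l)*l^n,n+1⟩ := by
  simp only [bset, if_true, if_false, pow_succ']
  exact coverB2 S (l^n) q



lemma aset_window {st : Bool} {p q : ℝ} {n : ℕ} :
    aset l Ka ⟨st,p,q,n⟩ ⊆ Icc p (p + (if st then 1 else 4) * l^n) := by
  have ht : (0:ℝ) ≤ l^n := le_of_lt (pow_pos S.hl0 _)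
  have hlt : (0:ℝ) ≤ l*l^n := mul_nonneg S.hl0.le ht
  have h01 := S.ka01
  have hl5 := S.hl5
  cases st <;> simp only [aset, aE, if_true, if_false, Bool.false_eq_true, Cell.st, Cell.p, Cell.n]
  · refine Set.union_subset (Set.union_subset (Set.union_subset ?_ ?_) ?_) ?_
    all_goals refine (im_subset_Icc h01 ht).trans (Icc_subset_Icc (by nlinarith) (by nlinarith))
  · refine (im_subset_Icc h01 ht).trans (Icc_subset_Icc (by nlinarith) (by nlinarith))

lemma bset_window {st : Bool} {p q : ℝ} {n : ℕ} :
    bset l Kb ⟨st,p,q,n⟩ ⊆ Icc q (q + (if st then 1 else 4) * l^n) := by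
  have ht : (0:ℝ) ≤ l^n := le_of_lt (pow_pos S.hl0 _)
  have hlt : (0:ℝ) ≤ l*l^n := mul_nonneg S.hl0.le ht
  have h01 := S.kb01
  have hl5 := S.hl5
  cases st <;> simp only [bset, bF, if_true, if_false, Bool.false_eq_true, Cell.st, Cell.q, Cell.n]
  · refine Set.union_subset (Set.union_subset ?_ ?_) (Set.union_subset ?_ ?_)
    all_goals refine (im_subset_Icc h01 ht).trans (Icc_subset_Icc (by nlinarith) (by nlinarith))
  · refine (im_subset_Icc h01 ht).trans (Icc_subset_Icc (by nlinarith) (by nlinarith))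



set_option maxHeartbeats 2000000 in
lemma sep_a {c c1 c2 : Cell} (h1 : c1 ∈ children l c) (h2 : c2 ∈ children l c) (hne : c1 ≠ c2)
    {x y : ℝ} (hx : x ∈ aset l Ka c1) (hy : y ∈ aset l Ka c2) : del l * l^c.n ≤ |x - y| := by
  obtain ⟨st,p,q,n⟩ := c
  have ht : (0:ℝ) < l^n := pow_pos S.hl0 n
  have hdel1 : del l ≤ l := min_le_left _ _
  have hdel2 : del l ≤ 1 - 5*l := min_le_right _ _
  have hd1 : del l * l^n ≤ l*l^n := mul_le_mul_of_nonneg_right hdel1 ht.le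
  have hd2 : del l * l^n ≤ l^n - 5*(l*l^n) := by nlinarith [mul_le_mul_of_nonneg_right hdel2 ht.le]
  have hu : (0:ℝ) < l*l^n := mul_pos S.hl0 ht
  cases st <;>
    simp only [children, Cell.st, Cell.p, Cell.q, Cell.n, if_true, if_false,
      Bool.false_eq_true, List.mem_cons, List.not_mem_nil, or_false] at h1 h2 <;>
  [(rcases h1 with h1|h1|h1|h1|h1|h1 <;> rcases h2 with h2|h2|h2|h2|h2|h2);
   (rcases h1 with h1|h1 <;> rcases h2 with h2|h2)] <;>
  subst h1 <;> subst h2 <;>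
  first
  | exact absurd rfl hne
  | (have Hx := aset_window S hx
     have Hy := aset_window S hy
     simp only [if_true, if_false, Bool.false_eq_true, pow_succ'] at Hx Hy
     obtain ⟨hx1, hx2⟩ := Hx
     obtain ⟨hy1, hy2⟩ := Hy
     ring_nf at hd1 hd2 hu ht
     try ring_nf at hx1
     try ring_nf at hx2
     try ring_nf at hy1
     try ring_nf at hy2
     try ring_nf
     rcases abs_cases (x - y) with ⟨he,_⟩|⟨he,_⟩ <;> rw [he] <;> ring_nf <;>
       linarith [hd1, hd2, hu, ht, hx1, hx2, hy1, hy2])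


set_option maxHeartbeats 2000000 in
lemma sep_b {c c1 c2 : Cell} (h1 : c1 ∈ children l c) (h2 : c2 ∈ children l c) (hne : c1 ≠ c2)
    {x y : ℝ} (hx : x ∈ bset l Kb c1) (hy : y ∈ bset l Kb c2) : del l * l^c.n ≤ |x - y| := by
  obtain ⟨st,p,q,n⟩ := c
  have ht : (0:ℝ) < l^n := pow_pos S.hl0 n
  have hdel1 : del l ≤ l := min_le_left _ _
  have hdel2 : del l ≤ 1 - 5*l := min_le_right _ _
  have hd1 : del l * l^n ≤ l*l^n := mul_le_mul_of_nonneg_right hdel1 ht.le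
  have hd2 : del l * l^n ≤ l^n - 5*(l*l^n) := by nlinarith [mul_le_mul_of_nonneg_right hdel2 ht.le]
  have hu : (0:ℝ) < l*l^n := mul_pos S.hl0 ht
  cases st <;>
    simp only [children, Cell.st, Cell.p, Cell.q, Cell.n, if_true, if_false,
      Bool.false_eq_true, List.mem_cons, List.not_mem_nil, or_false] at h1 h2 <;>
  [(rcases h1 with h1|h1|h1|h1|h1|h1 <;> rcases h2 with h2|h2|h2|h2|h2|h2);
   (rcases h1 with h1|h1 <;> rcases h2 with h2|h2)] <;>
  subst h1 <;> subst h2 <;>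
  first
  | exact absurd rfl hne
  | (have Hx := bset_window S hx
     have Hy := bset_window S hy
     simp only [if_true, if_false, Bool.false_eq_true, pow_succ'] at Hx Hy
     obtain ⟨hx1, hx2⟩ := Hx
     obtain ⟨hy1, hy2⟩ := Hy
     ring_nf at hd1 hd2 hu ht
     try ring_nf at hx1
     try ring_nf at hx2
     try ring_nf at hy1
     try ring_nf at hy2
     try ring_nf
     rcases abs_cases (x - y) with ⟨he,_⟩|⟨he,_⟩ <;> rw [he] <;> ring_nf <;>
       linarith [hd1, hd2, hu, ht, hx1, hx2, hy1, hy2])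



lemma child_aset_subset {c c' : Cell} (h : c' ∈ children l c) : aset l Ka c' ⊆ aset l Ka c := by
  obtain ⟨st,p,q,n⟩ := c
  cases st <;>
    simp only [children, Cell.st, Cell.p, Cell.q, Cell.n, if_true, if_false,
      Bool.false_eq_true, List.mem_cons, List.not_mem_nil, or_false] at h
  · rw [cover_a_false S p q n]
    rcases h with h|h|h|h|h|h <;> subst h <;> (intro z hz; simp only [Set.mem_union]; tauto)
  · rw [cover_a_true S p q n]
    rcases h with h|h <;> subst h <;> (intro z hz; simp only [Set.mem_union]; tauto)

lemma child_bset_subset {c c' : Cell} (h : c' ∈ children l c) : bset l Kb c' ⊆ bset l Kb c := by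
  obtain ⟨st,p,q,n⟩ := c
  cases st <;>
    simp only [children, Cell.st, Cell.p, Cell.q, Cell.n, if_true, if_false,
      Bool.false_eq_true, List.mem_cons, List.not_mem_nil, or_false] at h
  · rw [cover_b_false S p q n]
    rcases h with h|h|h|h|h|h <;> subst h <;> (intro z hz; simp only [Set.mem_union]; tauto)
  · rw [cover_b_true S p q n]
    rcases h with h|h <;> subst h <;> (intro z hz; simp only [Set.mem_union]; tauto)

lemma exists_child_a {c : Cell} {x : ℝ} (hx : x ∈ aset l Ka c) :
    ∃ c' ∈ children l c, x ∈ aset l Ka c' := by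
  obtain ⟨st,p,q,n⟩ := c
  cases st
  · rw [cover_a_false S p q n] at hx
    simp only [Set.mem_union] at hx
    simp only [children, Cell.st, Cell.p, Cell.q, Cell.n, if_true, if_false,
      Bool.false_eq_true, List.mem_cons, List.not_mem_nil, or_false]
    rcases hx with ((((h|h)|h)|h)|h)|h
    exacts [⟨_, Or.inl rfl, h⟩, ⟨_, Or.inr (Or.inl rfl), h⟩, ⟨_, Or.inr (Or.inr (Or.inl rfl)), h⟩,
      ⟨_, Or.inr (Or.inr (Or.inr (Or.inl rfl))), h⟩,
      ⟨_, Or.inr (Or.inr (Or.inr (Or.inr (Or.inl rfl)))), h⟩,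
      ⟨_, Or.inr (Or.inr (Or.inr (Or.inr (Or.inr rfl)))), h⟩]
  · rw [cover_a_true S p q n] at hx
    simp only [Set.mem_union] at hx
    simp only [children, Cell.st, Cell.p, Cell.q, Cell.n, if_true, if_false,
      Bool.false_eq_true, List.mem_cons, List.not_mem_nil, or_false]
    rcases hx with h|h
    exacts [⟨_, Or.inl rfl, h⟩, ⟨_, Or.inr rfl, h⟩]

lemma exists_child_b {c : Cell} {x : ℝ} (hx : x ∈ bset l Kb c) :
    ∃ c' ∈ children l c, x ∈ bset l Kb c' := by
  obtain ⟨st,p,q,n⟩ := c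
  cases st
  · rw [cover_b_false S p q n] at hx
    simp only [Set.mem_union] at hx
    simp only [children, Cell.st, Cell.p, Cell.q, Cell.n, if_true, if_false,
      Bool.false_eq_true, List.mem_cons, List.not_mem_nil, or_false]
    rcases hx with ((((h|h)|h)|h)|h)|h
    exacts [⟨_, Or.inl rfl, h⟩, ⟨_, Or.inr (Or.inl rfl), h⟩, ⟨_, Or.inr (Or.inr (Or.inl rfl)), h⟩,
      ⟨_, Or.inr (Or.inr (Or.inr (Or.inl rfl))), h⟩,
      ⟨_, Or.inr (Or.inr (Or.inr (Or.inr (Or.inl rfl)))), h⟩,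
      ⟨_, Or.inr (Or.inr (Or.inr (Or.inr (Or.inr rfl)))), h⟩]
  · rw [cover_b_true S p q n] at hx
    simp only [Set.mem_union] at hx
    simp only [children, Cell.st, Cell.p, Cell.q, Cell.n, if_true, if_false,
      Bool.false_eq_true, List.mem_cons, List.not_mem_nil, or_false]
    rcases hx with h|h
    exacts [⟨_, Or.inl rfl, h⟩, ⟨_, Or.inr rfl, h⟩]

lemma aset_base (c : Cell) : c.p ∈ aset l Ka c := by
  obtain ⟨st,p,q,n⟩ := c
  cases st <;> simp only [aset, aE, Cell.st, Cell.p, Cell.n, if_true, if_false, Bool.false_eq_true]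
  · exact Or.inl (Or.inl (Or.inl (im_mem_base S.ka0)))
  · exact im_mem_base S.ka0

lemma bset_base (c : Cell) : c.q ∈ bset l Kb c := by
  obtain ⟨st,p,q,n⟩ := c
  cases st <;> simp only [bset, bF, Cell.st, Cell.q, Cell.n, if_true, if_false, Bool.false_eq_true]
  · exact Or.inl (Or.inl (im_mem_base S.kb0))
  · exact im_mem_base S.kb0

lemma aset_compact (c : Cell) : IsCompact (aset l Ka c) := by
  obtain ⟨st,p,q,n⟩ := c
  cases st <;> simp only [aset, aE, Cell.st, if_true, if_false, Bool.false_eq_true]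
  · exact (((im_compact S.kac).union (im_compact S.kac)).union (im_compact S.kac)).union
      (im_compact S.kac)
  · exact im_compact S.kac

lemma bset_compact (c : Cell) : IsCompact (bset l Kb c) := by
  obtain ⟨st,p,q,n⟩ := c
  cases st <;> simp only [bset, bF, Cell.st, if_true, if_false, Bool.false_eq_true]
  · exact ((im_compact S.kbc).union (im_compact S.kbc)).union
      ((im_compact S.kbc).union (im_compact S.kbc))
  · exact im_compact S.kbc

omit S in
lemma aset_root : aset l Ka ⟨true,0,0,0⟩ = Ka := by
  simp only [aset, Cell.st, Cell.p, Cell.n, if_true, pow_zero]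
  exact im_one Ka

omit S in
lemma bset_root : bset l Kb ⟨true,0,0,0⟩ = Kb := by
  simp only [bset, Cell.st, Cell.q, Cell.n, if_true, pow_zero]
  exact im_one Kb

lemma aset_diam {c : Cell} {x y : ℝ} (hx : x ∈ aset l Ka c) (hy : y ∈ aset l Ka c) :
    |x - y| ≤ 4 * l^c.n := by
  have ht : (0:ℝ) ≤ l^c.n := le_of_lt (pow_pos S.hl0 _)
  obtain ⟨st,p,q,n⟩ := c
  have Hx := aset_window S hx
  have Hy := aset_window S hy
  obtain ⟨hx1, hx2⟩ := Hx
  obtain ⟨hy1, hy2⟩ := Hy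
  have hc : ((if st then 1 else 4) : ℝ) ≤ 4 := by cases st <;> norm_num
  have h4 : ((if st then 1 else 4) : ℝ) * l^n ≤ 4 * l^n := by
    apply mul_le_mul_of_nonneg_right hc ht
  rcases abs_cases (x - y) with ⟨he,_⟩|⟨he,_⟩ <;> rw [he] <;> simp only [Cell.n] <;> linarith

lemma bset_diam {c : Cell} {x y : ℝ} (hx : x ∈ bset l Kb c) (hy : y ∈ bset l Kb c) :
    |x - y| ≤ 4 * l^c.n := by
  have ht : (0:ℝ) ≤ l^c.n := le_of_lt (pow_pos S.hl0 _)
  obtain ⟨st,p,q,n⟩ := c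
  have Hx := bset_window S hx
  have Hy := bset_window S hy
  obtain ⟨hx1, hx2⟩ := Hx
  obtain ⟨hy1, hy2⟩ := Hy
  have hc : ((if st then 1 else 4) : ℝ) ≤ 4 := by cases st <;> norm_num
  have h4 : ((if st then 1 else 4) : ℝ) * l^n ≤ 4 * l^n := by
    apply mul_le_mul_of_nonneg_right hc ht
  rcases abs_cases (x - y) with ⟨he,_⟩|⟨he,_⟩ <;> rw [he] <;> simp only [Cell.n] <;> linarith



def firstChild (c : Cell) : Cell := ⟨false, c.p, c.q, c.n+1⟩

omit S in
lemma firstChild_mem (c : Cell) : firstChild c ∈ children l c := by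
  obtain ⟨st,p,q,n⟩ := c
  cases st <;> simp [children, firstChild]

noncomputable def nextA (l : ℝ) (Ka : Set ℝ) (c : Cell) (x : ℝ) : Cell :=
  letI := Classical.propDecidable (∃ c' ∈ children l c, x ∈ aset l Ka c')
  if h : ∃ c' ∈ children l c, x ∈ aset l Ka c' then h.choose else firstChild c

noncomputable def nextB (l : ℝ) (Kb : Set ℝ) (c : Cell) (x : ℝ) : Cell :=
  letI := Classical.propDecidable (∃ c' ∈ children l c, x ∈ bset l Kb c')
  if h : ∃ c' ∈ children l c, x ∈ bset l Kb c' then h.choose else firstChild c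

noncomputable def pathA (l : ℝ) (Ka : Set ℝ) (x : ℝ) : ℕ → Cell
  | 0 => ⟨true,0,0,0⟩
  | n+1 => nextA l Ka (pathA l Ka x n) x

noncomputable def pathB (l : ℝ) (Kb : Set ℝ) (x : ℝ) : ℕ → Cell
  | 0 => ⟨true,0,0,0⟩
  | n+1 => nextB l Kb (pathB l Kb x n) x

omit S in
lemma nextA_mem (c : Cell) (x : ℝ) : nextA l Ka c x ∈ children l c := by
  unfold nextA; split
  · rename_i h; exact h.choose_spec.1
  · exact firstChild_mem c

omit S in
lemma nextB_mem (c : Cell) (x : ℝ) : nextB l Kb c x ∈ children l c := by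
  unfold nextB; split
  · rename_i h; exact h.choose_spec.1
  · exact firstChild_mem c

lemma nextA_aset {c : Cell} {x : ℝ} (hx : x ∈ aset l Ka c) : x ∈ aset l Ka (nextA l Ka c x) := by
  unfold nextA; split
  · rename_i h; exact h.choose_spec.2
  · rename_i h; exact absurd (exists_child_a S hx) h

lemma nextB_bset {c : Cell} {x : ℝ} (hx : x ∈ bset l Kb c) : x ∈ bset l Kb (nextB l Kb c x) := by
  unfold nextB; split
  · rename_i h; exact h.choose_spec.2
  · rename_i h; exact absurd (exists_child_b S hx) h

omit S in
lemma pathA_level (x : ℝ) : ∀ n, (pathA l Ka x n).n = n := by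
  intro n; induction n with
  | zero => rfl
  | succ n ih => rw [pathA, children_level (nextA_mem (pathA l Ka x n) x), ih]

omit S in
lemma pathB_level (x : ℝ) : ∀ n, (pathB l Kb x n).n = n := by
  intro n; induction n with
  | zero => rfl
  | succ n ih => rw [pathB, children_level (nextB_mem (pathB l Kb x n) x), ih]

lemma pathA_aset {x : ℝ} (hx : x ∈ Ka) : ∀ n, x ∈ aset l Ka (pathA l Ka x n) := by
  intro n; induction n with
  | zero => rw [pathA, aset_root]; exact hx
  | succ n ih => exact nextA_aset S ih

lemma pathB_bset {x : ℝ} (hx : x ∈ Kb) : ∀ n, x ∈ bset l Kb (pathB l Kb x n) := by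
  intro n; induction n with
  | zero => rw [pathB, bset_root]; exact hx
  | succ n ih => exact nextB_bset S ih

lemma bset_pathA_anti (x : ℝ) (n : ℕ) :
    bset l Kb (pathA l Ka x (n+1)) ⊆ bset l Kb (pathA l Ka x n) :=
  child_bset_subset S (nextA_mem _ x)

lemma aset_pathB_anti (x : ℝ) (n : ℕ) :
    aset l Ka (pathB l Kb x (n+1)) ⊆ aset l Ka (pathB l Kb x n) :=
  child_aset_subset S (nextB_mem _ x)

lemma phi_exists (x : ℝ) : (⋂ n, bset l Kb (pathA l Ka x n)).Nonempty :=
  IsCompact.nonempty_iInter_of_sequence_nonempty_isCompact_isClosed _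
    (bset_pathA_anti S x)
    (fun n => ⟨(pathA l Ka x n).q, bset_base S _⟩)
    (bset_compact S _)
    (fun n => (bset_compact S _).isClosed)

lemma psi_exists (z : ℝ) : (⋂ n, aset l Ka (pathB l Kb z n)).Nonempty :=
  IsCompact.nonempty_iInter_of_sequence_nonempty_isCompact_isClosed _
    (aset_pathB_anti S z)
    (fun n => ⟨(pathB l Kb z n).p, aset_base S _⟩)
    (aset_compact S _)
    (fun n => (aset_compact S _).isClosed)



omit S in
lemma pathA_succ_mem (x : ℝ) (n : ℕ) :
    pathA l Ka x (n+1) ∈ children l (pathA l Ka x n) := nextA_mem _ x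

omit S in
lemma pathB_succ_mem (x : ℝ) (n : ℕ) :
    pathB l Kb x (n+1) ∈ children l (pathB l Kb x n) := nextB_mem _ x

lemma split_level {x y : ℝ} (hx : x ∈ Ka) (hy : y ∈ Ka) (hxy : x ≠ y) :
    ∃ n, pathA l Ka x n = pathA l Ka y n ∧ pathA l Ka x (n+1) ≠ pathA l Ka y (n+1) := by
  classical
  have hne : ∃ n, pathA l Ka x n ≠ pathA l Ka y n := by
    by_contra h
    push_neg at h
    have hd : ∀ n, |x - y| ≤ 4 * l^n := by
      intro n
      have h2 := pathA_aset S hy n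
      rw [← h n] at h2
      have hD := aset_diam S (pathA_aset S hx n) h2
      rwa [pathA_level x n] at hD
    have hpos : 0 < |x - y| := abs_pos.2 (sub_ne_zero.2 hxy)
    obtain ⟨n, hn⟩ := exists_pow_lt_of_lt_one (div_pos hpos (by norm_num : (0:ℝ) < 4))
      (lt_trans S.hl5 (by norm_num) : l < 1)
    have := hd n
    nlinarith [hn]
  have hm : pathA l Ka x (Nat.find hne) ≠ pathA l Ka y (Nat.find hne) := Nat.find_spec hne
  have hm0 : Nat.find hne ≠ 0 := by
    intro h0; rw [h0] at hm; exact hm rfl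
  obtain ⟨n, hn⟩ := Nat.exists_eq_succ_of_ne_zero hm0
  refine ⟨n, ?_, ?_⟩
  · have := Nat.find_min hne (m := n) (by omega)
    exact not_ne_iff.1 this
  · rw [show n + 1 = Nat.find hne from hn.symm]; exact hm



end Main
end RRX

def LipschitzEquiv {X Y : Type*} [MetricSpace X] [MetricSpace Y]
    (A : Set X) (B : Set Y) : Prop :=
  ∃ φ : X → Y, Set.BijOn φ A B ∧ ∃ c : ℝ, 0 < c ∧
    ∀ x ∈ A, ∀ y ∈ A, c⁻¹ * dist x y ≤ dist (φ x) (φ y) ∧ dist (φ x) (φ y) ≤ c * dist x y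

open RRX in
theorem example_attractors_lipschitzEquiv
    (l : ℝ) (hl : 0 < l ∧ l < 1 / 5)
    (a b : Fin 5 → ℝ)
    (ha : a = ![0, l * (1 - l), 2 * l * (1 - l), 3 * l, 1 - l])
    (hb : b = ![0, l * (1 - l), 2 * l, 3 * l - l ^ 2, 1 - l])
    (Ka Kb : Set ℝ)
    (hKane : Ka.Nonempty) (hKac : IsCompact Ka)
    (hKa : Ka = ⋃ i : Fin 5, (fun x => l * x + a i) '' Ka)
    (hKbne : Kb.Nonempty) (hKbc : IsCompact Kb)
    (hKb : Kb = ⋃ i : Fin 5, (fun x => l * x + b i) '' Kb) :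
    LipschitzEquiv Ka Kb := by
  classical
  obtain ⟨hl0, hl5⟩ := hl
  have hfin : ∀ (K : Set ℝ) (c : Fin 5 → ℝ), (⋃ i : Fin 5, (fun x => l * x + c i) '' K) =
      im l (c 0) K ∪ im l (c 1) K ∪ im l (c 2) K ∪ im l (c 3) K ∪ im l (c 4) K := by
    intro K c; ext x
    simp only [Set.mem_iUnion, Set.mem_union, im, Set.mem_image]
    constructor
    · rintro ⟨i, hi⟩
      fin_cases i
      exacts [Or.inl (Or.inl (Or.inl (Or.inl hi))), Or.inl (Or.inl (Or.inl (Or.inr hi))),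
        Or.inl (Or.inl (Or.inr hi)), Or.inl (Or.inr hi), Or.inr hi]
    · rintro ((((h|h)|h)|h)|h)
      exacts [⟨0, h⟩, ⟨1, h⟩, ⟨2, h⟩, ⟨3, h⟩, ⟨4, h⟩]
  rw [ha, hfin] at hKa
  rw [hb, hfin] at hKb
  norm_num [Matrix.cons_val_zero, Matrix.cons_val_one, Matrix.head_cons] at hKa hKb
  have eqa : Ka = im l 0 Ka ∪ im l (l*(1-l)) Ka ∪ im l (2*l*(1-l)) Ka ∪ im l (3*l) Ka
      ∪ im l (1-l) Ka := hKa
  have eqb : Kb = im l 0 Kb ∪ im l (l*(1-l)) Kb ∪ im l (2*l) Kb ∪ im l (3*l-l^2) Kb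
      ∪ im l (1-l) Kb := hKb
  have hself_a : ∀ x ∈ Ka, ∃ c, 0 ≤ c ∧ c ≤ 1 - l ∧ ∃ y ∈ Ka, x = l * y + c := by
    intro x hx
    rw [eqa] at hx
    rcases hx with ((((⟨y,hy,rfl⟩|⟨y,hy,rfl⟩)|⟨y,hy,rfl⟩)|⟨y,hy,rfl⟩)|⟨y,hy,rfl⟩)
    · exact ⟨0, le_refl _, by nlinarith, y, hy, rfl⟩
    · exact ⟨l*(1-l), by nlinarith, by nlinarith, y, hy, rfl⟩
    · exact ⟨2*l*(1-l), by nlinarith, by nlinarith, y, hy, rfl⟩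
    · exact ⟨3*l, by nlinarith, by nlinarith, y, hy, rfl⟩
    · exact ⟨1-l, by nlinarith, by nlinarith, y, hy, rfl⟩
  have hself_b : ∀ x ∈ Kb, ∃ c, 0 ≤ c ∧ c ≤ 1 - l ∧ ∃ y ∈ Kb, x = l * y + c := by
    intro x hx
    rw [eqb] at hx
    rcases hx with ((((⟨y,hy,rfl⟩|⟨y,hy,rfl⟩)|⟨y,hy,rfl⟩)|⟨y,hy,rfl⟩)|⟨y,hy,rfl⟩)
    · exact ⟨0, le_refl _, by nlinarith, y, hy, rfl⟩
    · exact ⟨l*(1-l), by nlinarith, by nlinarith, y, hy, rfl⟩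
    · exact ⟨2*l, by nlinarith, by nlinarith, y, hy, rfl⟩
    · exact ⟨3*l-l^2, by nlinarith, by nlinarith, y, hy, rfl⟩
    · exact ⟨1-l, by nlinarith, by nlinarith, y, hy, rfl⟩
  have hscale_a : ∀ x ∈ Ka, l * x ∈ Ka := by
    intro x hx
    rw [eqa]
    exact Or.inl (Or.inl (Or.inl (Or.inl ⟨x, hx, by ring⟩)))
  have hscale_b : ∀ x ∈ Kb, l * x ∈ Kb := by
    intro x hx
    rw [eqb]
    exact Or.inl (Or.inl (Or.inl (Or.inl ⟨x, hx, by ring⟩)))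
  have hl1 : l < 1 := lt_trans hl5 (by norm_num)
  have S : Setup l Ka Kb :=
    ⟨hl0, hl5, hKac, hKbc, RRX.subset_Icc01 hl0 hl1 hKac hKane hself_a,
     RRX.subset_Icc01 hl0 hl1 hKbc hKbne hself_b,
     RRX.zero_mem hl0 hl1 hKac hKane hself_a hscale_a,
     RRX.zero_mem hl0 hl1 hKbc hKbne hself_b hscale_b, eqa, eqb⟩
  have hex : ∀ x : ℝ, ∃ z : ℝ, ∀ n, z ∈ RRX.bset l Kb (RRX.pathA l Ka x n) := by
    intro x
    obtain ⟨z, hz⟩ := RRX.phi_exists S x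
    exact ⟨z, fun n => Set.mem_iInter.1 hz n⟩
  choose φ hφ using hex
  have hd : 0 < RRX.del l := RRX.del_pos S
  set d : ℝ := RRX.del l with hd_def
  set C : ℝ := 4 / d with hC_def
  have hC : 0 < C := by positivity
  have hCd : C * d = 4 := by rw [hC_def]; field_simp
  have hCi : C⁻¹ = d / 4 := by rw [hC_def]; field_simp
  -- the two-sided estimate
  have key : ∀ x ∈ Ka, ∀ y ∈ Ka,
      C⁻¹ * dist x y ≤ dist (φ x) (φ y) ∧ dist (φ x) (φ y) ≤ C * dist x y := by
    intro x hx y hy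
    rcases eq_or_ne x y with rfl | hxy
    · simp
    obtain ⟨n, hEq, hNe⟩ := RRX.split_level S hx hy hxy
    have hxn1 : x ∈ RRX.aset l Ka (RRX.pathA l Ka x (n+1)) := RRX.pathA_aset S hx (n+1)
    have hyn1 : y ∈ RRX.aset l Ka (RRX.pathA l Ka y (n+1)) := RRX.pathA_aset S hy (n+1)
    have hcx : RRX.pathA l Ka x (n+1) ∈ RRX.children l (RRX.pathA l Ka x n) :=
      RRX.pathA_succ_mem x n
    have hcy : RRX.pathA l Ka y (n+1) ∈ RRX.children l (RRX.pathA l Ka x n) := by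
      rw [hEq]; exact RRX.pathA_succ_mem y n
    have lower_a : d * l^n ≤ |x - y| := by
      have h := RRX.sep_a S hcx hcy hNe hxn1 hyn1
      rwa [RRX.pathA_level x n] at h
    have upper_a : |x - y| ≤ 4 * l^n := by
      have h2 := RRX.pathA_aset S hy n
      rw [← hEq] at h2
      have h := RRX.aset_diam S (RRX.pathA_aset S hx n) h2
      rwa [RRX.pathA_level x n] at h
    have lower_b : d * l^n ≤ |φ x - φ y| := by
      have h := RRX.sep_b S hcx hcy hNe (hφ x (n+1)) (hφ y (n+1))
      rwa [RRX.pathA_level x n] at h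
    have upper_b : |φ x - φ y| ≤ 4 * l^n := by
      have h2 := hφ y n
      rw [← hEq] at h2
      have h := RRX.bset_diam S (hφ x n) h2
      rwa [RRX.pathA_level x n] at h
    rw [Real.dist_eq, Real.dist_eq]
    have hd4 : (0:ℝ) ≤ d/4 := by positivity
    have e1 : C*(d*l^n) = 4*l^n := by rw [← hCd]; ring
    have e2 : (d/4)*(4*l^n) = d*l^n := by ring
    constructor
    · rw [hCi]
      have h := mul_le_mul_of_nonneg_left upper_a hd4
      linarith [lower_b, h, e2]
    · have h := mul_le_mul_of_nonneg_left lower_a hC.le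
      linarith [upper_b, h, e1]
  refine ⟨φ, ⟨?_, ?_, ?_⟩, C, hC, key⟩
  · -- MapsTo
    intro x _
    have h := hφ x 0
    rwa [RRX.pathA, RRX.bset_root] at h
  · -- InjOn
    intro x hx y hy hxy
    by_contra hne
    obtain ⟨hlow, _⟩ := key x hx y hy
    have h0 : dist x y > 0 := dist_pos.2 hne
    rw [hxy] at hlow
    simp only [dist_self] at hlow
    nlinarith [mul_pos (inv_pos.2 hC) h0]
  · -- SurjOn
    intro z hz
    obtain ⟨x, hxI⟩ := RRX.psi_exists S z
    have hxmem : ∀ n, x ∈ RRX.aset l Ka (RRX.pathB l Kb z n) := Set.mem_iInter.1 hxI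
    have hxKa : x ∈ Ka := by
      have h := hxmem 0
      rwa [RRX.pathB, RRX.aset_root] at h
    have hpaths : ∀ n, RRX.pathA l Ka x n = RRX.pathB l Kb z n := by
      intro n
      induction n with
      | zero => rfl
      | succ n ih =>
        have h1 : RRX.pathA l Ka x (n+1) ∈ RRX.children l (RRX.pathB l Kb z n) := by
          rw [← ih]; exact RRX.pathA_succ_mem x n
        have h2 : RRX.pathB l Kb z (n+1) ∈ RRX.children l (RRX.pathB l Kb z n) :=
          RRX.pathB_succ_mem z n
        by_contra hne
        have hsep := RRX.sep_a S h1 h2 hne (RRX.pathA_aset S hxKa (n+1)) (hxmem (n+1))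
        simp only [sub_self, abs_zero] at hsep
        nlinarith [mul_pos hd (pow_pos hl0 (RRX.pathB l Kb z n).n)]
    have hzb : ∀ n, z ∈ RRX.bset l Kb (RRX.pathA l Ka x n) := by
      intro n; rw [hpaths n]; exact RRX.pathB_bset S hz n
    have hsmall : ∀ n, |φ x - z| ≤ 4 * l^n := by
      intro n
      have h := RRX.bset_diam S (hφ x n) (hzb n)
      rwa [RRX.pathA_level x n] at h
    have hzero : |φ x - z| ≤ 0 := by
      by_contra hpos
      push_neg at hpos
      obtain ⟨n, hn⟩ := exists_pow_lt_of_lt_one (div_pos hpos (by norm_num : (0:ℝ) < 4))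
        (lt_trans hl5 (by norm_num) : l < 1)
      have := hsmall n
      nlinarith [hn]
    refine ⟨x, hxKa, ?_⟩
    have : φ x - z = 0 := by
      have := abs_nonneg (φ x - z)
      have h0 : |φ x - z| = 0 := le_antisymm hzero this
      exact abs_eq_zero.1 h0
    linarith [this]
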